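/- Take s = 400, k = 400, and ε = 0.01 in the hardness instance. Then any 1-consistent randomized algorithm has overall expected competitive ratio ρ < 1/3 + 0.01. -/

import Mathlib

open Finset

/-- Value of candidate `j` in row `i` of the hardness construction (rows indexed `1..r`):
row 1 is `(s, 1, 1)`; for `m ≥ 1`, rows `2m` and `2m+1` contain `s^{m+1}, s^{m+2}` in
columns 2,3, arranged according to the parity of `m`. -/
noncomputable def rowVal (s : ℝ) (i : ℕ) : Fin 3 → ℝ :=
  if i = 1 then ![s, 1, 1]
  else if (i % 2 = 0 ↔ (i / 2) % 2 = 1) then ![s, s ^ (i / 2 + 1), s ^ (i / 2 + 2)]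
  else ![s, s ^ (i / 2 + 2), s ^ (i / 2 + 1)]

/-- Probability that row `i` is realized: row 1 with probability `ε`, each of the other
`r - 1` rows with probability `(1-ε)/(r-1)`. -/
noncomputable def rowProb (ε : ℝ) (r : ℕ) (i : ℕ) : ℝ :=
  if i = 1 then ε else (1 - ε) / ((r : ℝ) - 1)

/-- The competitive ratio obtained by the randomized algorithm `(a₁, a₂)` on value
vector `v` when the arrival order is `π` (candidate `π t` arrives at time `t`),
averaged over the algorithm's internal randomness. -/
noncomputable def ratio (a₁ : Fin 3 × ℝ → ℝ) (a₂ : (Fin 3 × ℝ) × (Fin 3 × ℝ) → ℝ)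
    (v : Fin 3 → ℝ) (π : Equiv.Perm (Fin 3)) : ℝ :=
  let x : Fin 3 → ℝ := fun t => v (π t)
  let M : ℝ := max (v 0) (max (v 1) (v 2))
  let p1 := a₁ (π 0, x 0)
  let p2 := a₂ ((π 0, x 0), (π 1, x 1))
  p1 * (x 0 / M) + (1 - p1) * (p2 * (x 1 / M) + (1 - p2) * (x 2 / M))

/-- The overall expected competitive ratio `ρ`: expectation over the random row
`I ∈ {1, …, r}` and the uniformly random arrival order `π`. -/
noncomputable def rho (s ε : ℝ) (r : ℕ) (a₁ : Fin 3 × ℝ → ℝ)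
    (a₂ : (Fin 3 × ℝ) × (Fin 3 × ℝ) → ℝ) : ℝ :=
  ∑ i ∈ Finset.Icc 1 r, rowProb ε r i *
    ((1 / 6) * ∑ π : Equiv.Perm (Fin 3), ratio a₁ a₂ (rowVal s i) π)

/-- The algorithm is 1-consistent: its expected competitive ratio conditional on
row 1 (the predicted row) being realized equals 1. -/
noncomputable def Consistent (s : ℝ) (a₁ : Fin 3 × ℝ → ℝ)
    (a₂ : (Fin 3 × ℝ) × (Fin 3 × ℝ) → ℝ) : Prop :=
  (1 / 6) * ∑ π : Equiv.Perm (Fin 3), ratio a₁ a₂ (rowVal s 1) π = 1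


lemma perm3_sum (f : Equiv.Perm (Fin 3) → ℝ) :
    ∑ π : Equiv.Perm (Fin 3), f π =
    f 1 + f (Equiv.swap 0 1) + f (Equiv.swap 0 2) + f (Equiv.swap 1 2)
      + f (Equiv.swap 0 1 * Equiv.swap 1 2) + f (Equiv.swap 0 2 * Equiv.swap 1 2) := by
  have h : (Finset.univ : Finset (Equiv.Perm (Fin 3))) =
      {1, Equiv.swap 0 1, Equiv.swap 0 2, Equiv.swap 1 2,
       Equiv.swap 0 1 * Equiv.swap 1 2, Equiv.swap 0 2 * Equiv.swap 1 2} := by decide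
  rw [h]
  rw [Finset.sum_insert (by decide), Finset.sum_insert (by decide),
      Finset.sum_insert (by decide), Finset.sum_insert (by decide),
      Finset.sum_insert (by decide), Finset.sum_singleton]
  ring

lemma six_bound (α β q1 q2 q3 q4 u w : ℝ)
    (hα0 : 0 ≤ α) (hα1 : α ≤ 1) (hβ0 : 0 ≤ β) (hβ1 : β ≤ 1)
    (hq10 : 0 ≤ q1) (hq11 : q1 ≤ 1) (hq20 : 0 ≤ q2) (hq21 : q2 ≤ 1)
    (hq30 : 0 ≤ q3) (hq31 : q3 ≤ 1) (hq40 : 0 ≤ q4) (hq41 : q4 ≤ 1)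
    (hu0 : 0 ≤ u) (hu1 : u ≤ 1/400) (hw0 : 0 ≤ w) (hw1 : w ≤ 1/400) :
    u + u
    + (α*w + (1-α)*(q1*u + (1-q1)*1))
    + (β*1 + (1-β)*(q2*w + (1-q2)*u))
    + (α*w + (1-α)*(q3*1 + (1-q3)*u))
    + (β*1 + (1-β)*(q4*u + (1-q4)*w))
    ≤ 6*(1/400) + 2*(1-α) + 2*β := by
  have h1 : α*w + (1-α)*(q1*u + (1-q1)*1) ≤ 1/400 + (1-α) := by
    nlinarith [mul_nonneg hα0 (sub_nonneg.2 hw1),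
      mul_nonneg (mul_nonneg (sub_nonneg.2 hα1) hq10) (sub_nonneg.2 hu1),
      mul_nonneg (sub_nonneg.2 hα1) (sub_nonneg.2 hq11),
      mul_nonneg (sub_nonneg.2 hα1) hq10]
  have h2 : β*1 + (1-β)*(q2*w + (1-q2)*u) ≤ β + 1/400 := by
    nlinarith [mul_nonneg (mul_nonneg (sub_nonneg.2 hβ1) hq20) (sub_nonneg.2 hw1),
      mul_nonneg (mul_nonneg (sub_nonneg.2 hβ1) (sub_nonneg.2 hq21)) (sub_nonneg.2 hu1),
      mul_nonneg hβ0 (by norm_num : (0:ℝ) ≤ 1/400)]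
  have h3 : α*w + (1-α)*(q3*1 + (1-q3)*u) ≤ 1/400 + (1-α) := by
    nlinarith [mul_nonneg hα0 (sub_nonneg.2 hw1),
      mul_nonneg (mul_nonneg (sub_nonneg.2 hα1) (sub_nonneg.2 hq31)) (sub_nonneg.2 hu1),
      mul_nonneg (sub_nonneg.2 hα1) hq30,
      mul_nonneg (sub_nonneg.2 hα1) (sub_nonneg.2 hq31)]
  have h4 : β*1 + (1-β)*(q4*u + (1-q4)*w) ≤ β + 1/400 := by
    nlinarith [mul_nonneg (mul_nonneg (sub_nonneg.2 hβ1) hq40) (sub_nonneg.2 hu1),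
      mul_nonneg (mul_nonneg (sub_nonneg.2 hβ1) (sub_nonneg.2 hq41)) (sub_nonneg.2 hw1),
      mul_nonneg hβ0 (by norm_num : (0:ℝ) ≤ 1/400)]
  linarith

lemma ratio_le_one (a₁ : Fin 3 × ℝ → ℝ) (a₂ : (Fin 3 × ℝ) × (Fin 3 × ℝ) → ℝ)
    (ha₁ : ∀ o, a₁ o ∈ Set.Icc (0 : ℝ) 1) (ha₂ : ∀ o, a₂ o ∈ Set.Icc (0 : ℝ) 1)
    (v : Fin 3 → ℝ) (π : Equiv.Perm (Fin 3)) (hv : ∀ j, 0 ≤ v j) (hv0 : 0 < v 0) :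
    ratio a₁ a₂ v π ≤ 1 := by
  set M : ℝ := max (v 0) (max (v 1) (v 2)) with hMdef
  have hMpos : 0 < M := lt_of_lt_of_le hv0 (le_max_left _ _)
  have hle : ∀ j, v j ≤ M := by
    intro j
    fin_cases j
    · exact le_max_left _ _
    · exact le_trans (le_max_left _ _) (le_max_right _ _)
    · exact le_trans (le_max_right _ _) (le_max_right _ _)
  have hd : ∀ t : Fin 3, v (π t) / M ∈ Set.Icc (0:ℝ) 1 := by
    intro t
    exact ⟨div_nonneg (hv _) hMpos.le, (div_le_one hMpos).2 (hle _)⟩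
  obtain ⟨h10, h11⟩ := ha₁ (π 0, v (π 0))
  obtain ⟨h20, h21⟩ := ha₂ ((π 0, v (π 0)), (π 1, v (π 1)))
  obtain ⟨d00, d01⟩ := hd 0
  obtain ⟨d10, d11⟩ := hd 1
  obtain ⟨d20, d21⟩ := hd 2
  show a₁ (π 0, v (π 0)) * (v (π 0) / M) + (1 - a₁ (π 0, v (π 0))) *
    (a₂ ((π 0, v (π 0)), (π 1, v (π 1))) * (v (π 1) / M) +
      (1 - a₂ ((π 0, v (π 0)), (π 1, v (π 1)))) * (v (π 2) / M)) ≤ 1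
  nlinarith [mul_nonneg (sub_nonneg.2 h11) (sub_nonneg.2 d11),
    mul_nonneg (sub_nonneg.2 h21) (sub_nonneg.2 d21),
    mul_nonneg h20 (sub_nonneg.2 d11), mul_nonneg (sub_nonneg.2 h21) d20]

lemma consistent_first (a₁ : Fin 3 × ℝ → ℝ) (a₂ : (Fin 3 × ℝ) × (Fin 3 × ℝ) → ℝ)
    (ha₁ : ∀ o, a₁ o ∈ Set.Icc (0 : ℝ) 1) (ha₂ : ∀ o, a₂ o ∈ Set.Icc (0 : ℝ) 1)
    (hcons : Consistent 400 a₁ a₂) : a₁ (0, 400) = 1 := by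
  have hrv : rowVal 400 1 = ![400, 1, 1] := by simp [rowVal]
  have hv : ∀ j, 0 ≤ rowVal 400 1 j := by
    rw [hrv]; intro j; fin_cases j <;> norm_num
  have hv0 : 0 < rowVal 400 1 0 := by rw [hrv]; norm_num
  have hb := fun π => ratio_le_one a₁ a₂ ha₁ ha₂ (rowVal 400 1) π hv hv0
  have hsum : ∑ π : Equiv.Perm (Fin 3), ratio a₁ a₂ (rowVal 400 1) π = 6 := by
    have := hcons
    unfold Consistent at this
    linarith
  have hid : ratio a₁ a₂ (rowVal 400 1) 1 ≥ 1 := by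
    rw [perm3_sum] at hsum
    have b1 := hb (Equiv.swap 0 1)
    have b2 := hb (Equiv.swap 0 2)
    have b3 := hb (Equiv.swap 1 2)
    have b4 := hb (Equiv.swap 0 1 * Equiv.swap 1 2)
    have b5 := hb (Equiv.swap 0 2 * Equiv.swap 1 2)
    linarith
  have hval : ratio a₁ a₂ (rowVal 400 1) 1 =
      a₁ (0, 400) * 1 + (1 - a₁ (0, 400)) *
        (a₂ ((0, 400), (1, 1)) * (1/400) + (1 - a₂ ((0, 400), (1, 1))) * (1/400)) := by
    rw [hrv]
    simp only [ratio]
    norm_num [show (![400, 1, 1] : Fin 3 → ℝ) 2 = 1 from rfl]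
  obtain ⟨h10, h11⟩ := ha₁ (0, 400)
  obtain ⟨h20, h21⟩ := ha₂ ((0, 400), (1, 1))
  rw [hval] at hid
  nlinarith
lemma avgA (a₁ : Fin 3 × ℝ → ℝ) (a₂ : (Fin 3 × ℝ) × (Fin 3 × ℝ) → ℝ)
    (ha₁ : ∀ o, a₁ o ∈ Set.Icc (0 : ℝ) 1) (ha₂ : ∀ o, a₂ o ∈ Set.Icc (0 : ℝ) 1)
    (h0 : a₁ (0, 400) = 1) (m : ℕ) :
    (1/6) * ∑ π : Equiv.Perm (Fin 3),
        ratio a₁ a₂ ![400, (400:ℝ)^(m+1), (400:ℝ)^(m+2)] π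
      ≤ 1/400 + (1 - a₁ (1, (400:ℝ)^(m+1)) + a₁ (2, (400:ℝ)^(m+2)))/3 := by
  set A : ℝ := (400:ℝ)^(m+1) with hAdef
  set B : ℝ := (400:ℝ)^(m+2) with hBdef
  have hApos : 0 < A := by positivity
  have hBpos : 0 < B := by positivity
  have hAB : A ≤ B := by
    apply pow_le_pow_right₀ (by norm_num) (by omega)
  have h4A : (400:ℝ) ≤ A := by
    calc (400:ℝ) = 400^1 := (pow_one _).symm
    _ ≤ A := pow_le_pow_right₀ (by norm_num) (by omega)
  have hM : max (400:ℝ) (max A B) = B := by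
    rw [max_eq_right hAB, max_eq_right (le_trans h4A hAB)]
  have hBB : B / B = 1 := div_self (ne_of_gt hBpos)
  have hu0 : 0 ≤ 400 / B := by positivity
  have hu1 : 400 / B ≤ 1/400 := by
    rw [div_le_div_iff₀ hBpos (by norm_num)]
    have h1 : (400:ℝ)^2 ≤ 400^(m+2) := pow_le_pow_right₀ (by norm_num) (by omega)
    rw [hBdef]
    nlinarith
  have hw : A / B = 1 / 400 := by
    rw [div_eq_div_iff (ne_of_gt hBpos) (by norm_num : (400:ℝ) ≠ 0), hAdef, hBdef]; ring
  have e1 : ratio a₁ a₂ ![400, A, B] 1 = 400 / B := by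
    simp only [ratio]
    simp [hM, h0]
  have e4 : ratio a₁ a₂ ![400, A, B] (Equiv.swap 1 2) = 400 / B := by
    simp only [ratio]
    simp [Equiv.swap_apply_def, hM, h0]
  have e2 : ratio a₁ a₂ ![400, A, B] (Equiv.swap 0 1) =
      a₁ (1, A) * (A/B) + (1 - a₁ (1, A)) *
        (a₂ ((1, A), (0, 400)) * (400/B) + (1 - a₂ ((1, A), (0, 400))) * 1) := by
    simp only [ratio]
    simp [Equiv.swap_apply_def, hM, hBB]
  have e5 : ratio a₁ a₂ ![400, A, B] (Equiv.swap 0 1 * Equiv.swap 1 2) =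
      a₁ (1, A) * (A/B) + (1 - a₁ (1, A)) *
        (a₂ ((1, A), (2, B)) * 1 + (1 - a₂ ((1, A), (2, B))) * (400/B)) := by
    simp only [ratio]
    simp [Equiv.swap_apply_def, hM, hBB]
  have e3 : ratio a₁ a₂ ![400, A, B] (Equiv.swap 0 2) =
      a₁ (2, B) * 1 + (1 - a₁ (2, B)) *
        (a₂ ((2, B), (1, A)) * (A/B) + (1 - a₂ ((2, B), (1, A))) * (400/B)) := by
    simp only [ratio]
    simp [Equiv.swap_apply_def, hM, hBB]
  have e6 : ratio a₁ a₂ ![400, A, B] (Equiv.swap 0 2 * Equiv.swap 1 2) =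
      a₁ (2, B) * 1 + (1 - a₁ (2, B)) *
        (a₂ ((2, B), (0, 400)) * (400/B) + (1 - a₂ ((2, B), (0, 400))) * (A/B)) := by
    simp only [ratio]
    simp [Equiv.swap_apply_def, hM, hBB]
  rw [perm3_sum, e1, e2, e3, e4, e5, e6]
  obtain ⟨hα0, hα1⟩ := ha₁ (1, A)
  obtain ⟨hβ0, hβ1⟩ := ha₁ (2, B)
  obtain ⟨hq10, hq11⟩ := ha₂ ((1, A), (0, 400))
  obtain ⟨hq20, hq21⟩ := ha₂ ((2, B), (1, A))
  obtain ⟨hq30, hq31⟩ := ha₂ ((1, A), (2, B))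
  obtain ⟨hq40, hq41⟩ := ha₂ ((2, B), (0, 400))
  have six := six_bound (a₁ (1, A)) (a₁ (2, B)) (a₂ ((1, A), (0, 400)))
    (a₂ ((2, B), (1, A))) (a₂ ((1, A), (2, B))) (a₂ ((2, B), (0, 400)))
    (400/B) (A/B) hα0 hα1 hβ0 hβ1 hq10 hq11 hq20 hq21 hq30 hq31 hq40 hq41
    hu0 hu1 (by positivity) (le_of_eq hw)
  linarith
lemma avgB (a₁ : Fin 3 × ℝ → ℝ) (a₂ : (Fin 3 × ℝ) × (Fin 3 × ℝ) → ℝ)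
    (ha₁ : ∀ o, a₁ o ∈ Set.Icc (0 : ℝ) 1) (ha₂ : ∀ o, a₂ o ∈ Set.Icc (0 : ℝ) 1)
    (h0 : a₁ (0, 400) = 1) (m : ℕ) :
    (1/6) * ∑ π : Equiv.Perm (Fin 3),
        ratio a₁ a₂ ![400, (400:ℝ)^(m+2), (400:ℝ)^(m+1)] π
      ≤ 1/400 + (1 - a₁ (2, (400:ℝ)^(m+1)) + a₁ (1, (400:ℝ)^(m+2)))/3 := by
  set A : ℝ := (400:ℝ)^(m+1) with hAdef
  set B : ℝ := (400:ℝ)^(m+2) with hBdef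
  have hApos : 0 < A := by positivity
  have hBpos : 0 < B := by positivity
  have hAB : A ≤ B := by
    apply pow_le_pow_right₀ (by norm_num) (by omega)
  have h4A : (400:ℝ) ≤ A := by
    calc (400:ℝ) = 400^1 := (pow_one _).symm
    _ ≤ A := pow_le_pow_right₀ (by norm_num) (by omega)
  have hM : max (400:ℝ) (max B A) = B := by
    rw [max_eq_left hAB, max_eq_right (le_trans h4A hAB)]
  have hBB : B / B = 1 := div_self (ne_of_gt hBpos)
  have hu0 : 0 ≤ 400 / B := by positivity
  have hu1 : 400 / B ≤ 1/400 := by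
    rw [div_le_div_iff₀ hBpos (by norm_num)]
    have h1 : (400:ℝ)^2 ≤ 400^(m+2) := pow_le_pow_right₀ (by norm_num) (by omega)
    rw [hBdef]
    nlinarith
  have hw : A / B = 1 / 400 := by
    rw [div_eq_div_iff (ne_of_gt hBpos) (by norm_num : (400:ℝ) ≠ 0), hAdef, hBdef]; ring
  have e1 : ratio a₁ a₂ ![400, B, A] 1 = 400 / B := by
    simp only [ratio]
    simp [hM, h0]
  have e4 : ratio a₁ a₂ ![400, B, A] (Equiv.swap 1 2) = 400 / B := by
    simp only [ratio]
    simp [Equiv.swap_apply_def, hM, h0]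
  have e2 : ratio a₁ a₂ ![400, B, A] (Equiv.swap 0 1) =
      a₁ (1, B) * 1 + (1 - a₁ (1, B)) *
        (a₂ ((1, B), (0, 400)) * (400/B) + (1 - a₂ ((1, B), (0, 400))) * (A/B)) := by
    simp only [ratio]
    simp [Equiv.swap_apply_def, hM, hBB]
  have e5 : ratio a₁ a₂ ![400, B, A] (Equiv.swap 0 1 * Equiv.swap 1 2) =
      a₁ (1, B) * 1 + (1 - a₁ (1, B)) *
        (a₂ ((1, B), (2, A)) * (A/B) + (1 - a₂ ((1, B), (2, A))) * (400/B)) := by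
    simp only [ratio]
    simp [Equiv.swap_apply_def, hM, hBB]
  have e3 : ratio a₁ a₂ ![400, B, A] (Equiv.swap 0 2) =
      a₁ (2, A) * (A/B) + (1 - a₁ (2, A)) *
        (a₂ ((2, A), (1, B)) * 1 + (1 - a₂ ((2, A), (1, B))) * (400/B)) := by
    simp only [ratio]
    simp [Equiv.swap_apply_def, hM, hBB]
  have e6 : ratio a₁ a₂ ![400, B, A] (Equiv.swap 0 2 * Equiv.swap 1 2) =
      a₁ (2, A) * (A/B) + (1 - a₁ (2, A)) *
        (a₂ ((2, A), (0, 400)) * (400/B) + (1 - a₂ ((2, A), (0, 400))) * 1) := by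
    simp only [ratio]
    simp [Equiv.swap_apply_def, hM, hBB]
  rw [perm3_sum, e1, e2, e3, e4, e5, e6]
  obtain ⟨hα0, hα1⟩ := ha₁ (2, A)
  obtain ⟨hβ0, hβ1⟩ := ha₁ (1, B)
  obtain ⟨hq10, hq11⟩ := ha₂ ((2, A), (0, 400))
  obtain ⟨hq20, hq21⟩ := ha₂ ((1, B), (2, A))
  obtain ⟨hq30, hq31⟩ := ha₂ ((2, A), (1, B))
  obtain ⟨hq40, hq41⟩ := ha₂ ((1, B), (0, 400))
  have six := six_bound (a₁ (2, A)) (a₁ (1, B)) (a₂ ((2, A), (0, 400)))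
    (a₂ ((1, B), (2, A))) (a₂ ((2, A), (1, B))) (a₂ ((1, B), (0, 400)))
    (400/B) (A/B) hα0 hα1 hβ0 hβ1 hq10 hq11 hq20 hq21 hq30 hq31 hq40 hq41
    hu0 hu1 (by positivity) (le_of_eq hw)
  linarith
lemma rowVal_pair (m : ℕ) (hm : 1 ≤ m) :
    (rowVal 400 (2*m) = ![(400:ℝ), 400^(m+1), 400^(m+2)] ∧
     rowVal 400 (2*m+1) = ![(400:ℝ), 400^(m+2), 400^(m+1)]) ∨
    (rowVal 400 (2*m) = ![(400:ℝ), 400^(m+2), 400^(m+1)] ∧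
     rowVal 400 (2*m+1) = ![(400:ℝ), 400^(m+1), 400^(m+2)]) := by
  have h1 : ¬(2*m = 1) := by omega
  have h2 : ¬(2*m+1 = 1) := by omega
  have h3 : 2*m % 2 = 0 := by omega
  have h4 : (2*m+1) % 2 = 1 := by omega
  have h5 : 2*m/2 = m := by omega
  have h6 : (2*m+1)/2 = m := by omega
  by_cases hp : m % 2 = 1
  · left
    constructor
    · unfold rowVal
      rw [if_neg h1, h3, h5, if_pos (by simp [hp])]
    · unfold rowVal
      rw [if_neg h2, h4, h6, if_neg (by simp [hp])]
  · right
    constructor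
    · unfold rowVal
      rw [if_neg h1, h3, h5, if_neg (by simp [hp])]
    · unfold rowVal
      rw [if_neg h2, h4, h6, if_pos (by simp [hp])]

lemma pair_bound (a₁ : Fin 3 × ℝ → ℝ) (a₂ : (Fin 3 × ℝ) × (Fin 3 × ℝ) → ℝ)
    (ha₁ : ∀ o, a₁ o ∈ Set.Icc (0 : ℝ) 1) (ha₂ : ∀ o, a₂ o ∈ Set.Icc (0 : ℝ) 1)
    (h0 : a₁ (0, 400) = 1) (m : ℕ) (hm : 1 ≤ m) :
    ((1/6) * ∑ π : Equiv.Perm (Fin 3), ratio a₁ a₂ (rowVal 400 (2*m)) π)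
    + ((1/6) * ∑ π : Equiv.Perm (Fin 3), ratio a₁ a₂ (rowVal 400 (2*m+1)) π)
    ≤ 2*(1/400) + (2 - (a₁ (1, (400:ℝ)^(m+1)) + a₁ (2, (400:ℝ)^(m+1)))
        + (a₁ (1, (400:ℝ)^(m+2)) + a₁ (2, (400:ℝ)^(m+2))))/3 := by
  have hA := avgA a₁ a₂ ha₁ ha₂ h0 m
  have hB := avgB a₁ a₂ ha₁ ha₂ h0 m
  rcases rowVal_pair m hm with ⟨hx, hy⟩ | ⟨hx, hy⟩ <;> rw [hx, hy] <;> linarith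

lemma sum_pairs (g : ℕ → ℝ) (n : ℕ) :
    ∑ i ∈ Finset.Icc 2 (2*n+1), g i = ∑ m ∈ Finset.Icc 1 n, (g (2*m) + g (2*m+1)) := by
  induction n with
  | zero => rw [Finset.Icc_eq_empty (by omega), Finset.Icc_eq_empty (by omega)]; simp
  | succ n ih =>
    rw [show 2*(n+1)+1 = (2*n+1)+1+1 by ring, Finset.sum_Icc_succ_top (by omega),
        Finset.sum_Icc_succ_top (by omega), ih]
    conv_rhs => rw [Finset.sum_Icc_succ_top (by omega : 1 ≤ n+1)]
    rw [show 2*(n+1) = 2*n+1+1 by ring]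
    ring

lemma telescope (F : ℕ → ℝ) (n : ℕ) :
    ∑ m ∈ Finset.Icc 1 n, (F (m+1) - F m) = F (n+1) - F 1 := by
  induction n with
  | zero => rw [Finset.Icc_eq_empty (by omega)]; simp
  | succ n ih =>
    rw [Finset.sum_Icc_succ_top (by omega), ih]
    ring

/-- With `s = 400`, `k = 400` (so `r = 799`) and `ε = 0.01` in the
hardness instance, any 1-consistent randomized algorithm has overall expected
competitive ratio `ρ < 1/3 + 0.01`. -/
theorem secretary_hardness_one_third_plus
    (a₁ : Fin 3 × ℝ → ℝ) (a₂ : (Fin 3 × ℝ) × (Fin 3 × ℝ) → ℝ)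
    (ha₁ : ∀ o, a₁ o ∈ Set.Icc (0 : ℝ) 1) (ha₂ : ∀ o, a₂ o ∈ Set.Icc (0 : ℝ) 1)
    (hcons : Consistent 400 a₁ a₂) :
    rho 400 0.01 (2 * 400 - 1) a₁ a₂ < 1 / 3 + 0.01 := by
  have h0 := consistent_first a₁ a₂ ha₁ ha₂ hcons
  unfold Consistent at hcons
  set G : ℕ → ℝ := fun i => (1/6) * ∑ π : Equiv.Perm (Fin 3),
      ratio a₁ a₂ (rowVal 400 i) π with hG
  set F : ℕ → ℝ := fun m => a₁ (1, (400:ℝ)^(m+1)) + a₁ (2, (400:ℝ)^(m+1)) with hF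
  clear_value G F
  have hr : (2*400-1 : ℕ) = 799 := by norm_num
  have hrho : rho 400 0.01 (2*400-1) a₁ a₂
      = ∑ i ∈ Finset.Icc 1 799, rowProb 0.01 799 i * G i := by
    simp only [rho, hr, hG]
  have hsplit : Finset.Icc 1 799 = insert 1 (Finset.Icc 2 799) := by
    ext x; simp [Finset.mem_Icc, Finset.mem_insert]; omega
  have h1mem : (1:ℕ) ∉ Finset.Icc 2 799 := by simp
  have hG1 : G 1 = 1 := by simp only [hG]; exact hcons
  have hp1 : rowProb 0.01 799 1 = 0.01 := by rw [rowProb, if_pos rfl]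
  have hsum2 : ∑ i ∈ Finset.Icc 2 799, rowProb 0.01 799 i * G i
      = (0.99/798) * ∑ i ∈ Finset.Icc 2 799, G i := by
    rw [Finset.mul_sum]
    apply Finset.sum_congr rfl
    intro i hi
    have hne : i ≠ 1 := by
      have := Finset.mem_Icc.1 hi; omega
    rw [rowProb, if_neg hne]
    norm_num
  have hpairs : ∑ i ∈ Finset.Icc 2 799, G i
      = ∑ m ∈ Finset.Icc 1 399, (G (2*m) + G (2*m+1)) := by
    rw [show (799:ℕ) = 2*399+1 by norm_num]
    exact sum_pairs G 399
  have hbound : ∑ m ∈ Finset.Icc 1 399, (G (2*m) + G (2*m+1))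
      ≤ ∑ m ∈ Finset.Icc 1 399, ((2*(1/400) + 2/3) + (1/3)*(F (m+1) - F m)) := by
    apply Finset.sum_le_sum
    intro m hm
    have hm1 : 1 ≤ m := (Finset.mem_Icc.1 hm).1
    have hpb := pair_bound a₁ a₂ ha₁ ha₂ h0 m hm1
    have hFm : F m = a₁ (1, (400:ℝ)^(m+1)) + a₁ (2, (400:ℝ)^(m+1)) := by simp only [hF]
    have hFm1 : F (m+1) = a₁ (1, (400:ℝ)^(m+2)) + a₁ (2, (400:ℝ)^(m+2)) := by
      simp only [hF]
    have hGm : G (2*m) = (1/6) * ∑ π : Equiv.Perm (Fin 3),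
        ratio a₁ a₂ (rowVal 400 (2*m)) π := by simp only [hG]
    have hGm1 : G (2*m+1) = (1/6) * ∑ π : Equiv.Perm (Fin 3),
        ratio a₁ a₂ (rowVal 400 (2*m+1)) π := by simp only [hG]
    rw [hGm, hGm1, hFm, hFm1]
    linarith
  have htel : ∑ m ∈ Finset.Icc 1 399, ((2*(1/400) + 2/3) + (1/3)*(F (m+1) - F m))
      = 399*(2*(1/400) + 2/3) + (1/3)*(F 400 - F 1) := by
    rw [Finset.sum_add_distrib, Finset.sum_const, ← Finset.mul_sum, telescope]
    norm_num [Nat.card_Icc]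
  have hF400 : F 400 ≤ 2 := by
    have h1 := (ha₁ (1, (400:ℝ)^(400+1))).2
    have h2 := (ha₁ (2, (400:ℝ)^(400+1))).2
    simp only [hF]
    linarith
  have hF1 : 0 ≤ F 1 := by
    have h1 := (ha₁ (1, (400:ℝ)^(1+1))).1
    have h2 := (ha₁ (2, (400:ℝ)^(1+1))).1
    simp only [hF]
    linarith
  have hS : ∑ i ∈ Finset.Icc 2 799, G i ≤ 399*(2*(1/400) + 2/3) + (1/3)*2 := by
    rw [hpairs]
    calc ∑ m ∈ Finset.Icc 1 399, (G (2*m) + G (2*m+1))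
        ≤ ∑ m ∈ Finset.Icc 1 399, ((2*(1/400) + 2/3) + (1/3)*(F (m+1) - F m)) := hbound
      _ = 399*(2*(1/400) + 2/3) + (1/3)*(F 400 - F 1) := htel
      _ ≤ 399*(2*(1/400) + 2/3) + (1/3)*2 := by linarith
  rw [hrho, hsplit, Finset.sum_insert h1mem, hG1, hp1, hsum2]
  have hc : (0:ℝ) ≤ 0.99/798 := by norm_num
  have := mul_le_mul_of_nonneg_left hS hc
  have hnum : (0.01:ℝ) * 1 + (0.99/798) * (399*(2*(1/400) + 2/3) + (1/3)*2)
      < 1/3 + 0.01 := by norm_num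
  linarith
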